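/- Let 0 ≤ α < n and let Ω be homogeneous of degree zero and bounded between positive constants c and C on an open subset E ⊂ S^{n-1}. Let Q₁ be a cube with side length ρ, h ∈ ℝⁿ with h/|h| in a suitable cone and |h| large, and Q = Q₁ + ρh. Then for every locally integrable b with ∫_{Q₁} b = 0 and the function φ as above (built from sgn(b) on Q₁), the estimate |∫_{Q₁} Ω(x-y)|x-y|^{α-n} b(y)φ(y) dy| ≥ c' (ρ|h|)^{α-n} ∫_{Q₁} |b| holds for all x ∈ Q, where c' > 0 depends only on c, n, α. -/

import Mathlib

open MeasureTheory
open scoped ENNReal NNReal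

/-- The cube in `ℝⁿ` with center `a` and side length `r`. -/
def cubeC (n : ℕ) (a : EuclideanSpace ℝ (Fin n)) (r : ℝ) : Set (EuclideanSpace ℝ (Fin n)) :=
  {x | ∀ i, |x i - a i| ≤ r / 2}

lemma cubeC_isClosed (n : ℕ) (a : EuclideanSpace ℝ (Fin n)) (r : ℝ) :
    IsClosed (cubeC n a r) := by
  have : cubeC n a r = ⋂ i, {x : EuclideanSpace ℝ (Fin n) | |x i - a i| ≤ r / 2} := by
    ext x; simp [cubeC, Set.mem_iInter]
  rw [this]
  refine isClosed_iInter fun i => isClosed_le ?_ continuous_const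
  exact continuous_abs.comp (((EuclideanSpace.proj i).continuous).sub continuous_const)

lemma cubeC_isCompact (n : ℕ) (a : EuclideanSpace ℝ (Fin n)) (r : ℝ) :
    IsCompact (cubeC n a r) := by
  refine Metric.isCompact_of_isClosed_isBounded (cubeC_isClosed n a r) ?_
  refine (Metric.isBounded_closedBall (x := a) (r := Real.sqrt (n * (r / 2) ^ 2))).subset ?_
  intro x hx
  rw [Metric.mem_closedBall, dist_eq_norm, EuclideanSpace.norm_eq]
  apply Real.sqrt_le_sqrt
  calc ∑ i, ‖x i - a i‖ ^ 2 ≤ ∑ _i : Fin n, (r / 2) ^ 2 := by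
        refine Finset.sum_le_sum fun i _ => ?_
        rw [Real.norm_eq_abs]
        calc |x i - a i| ^ 2 = |x i - a i| ^ 2 := rfl
          _ ≤ (r / 2) ^ 2 := by
            have h1 := hx i
            nlinarith [abs_nonneg (x i - a i)]
    _ = n * (r / 2) ^ 2 := by simp [Finset.sum_const, mul_comm]

lemma abs_real_sign_le_one (t : ℝ) : |Real.sign t| ≤ 1 := by
  rcases Real.sign_apply_eq t with h | h | h <;> rw [h] <;> norm_num

lemma mul_real_sign (t : ℝ) : t * Real.sign t = |t| := by
  rcases lt_trichotomy t 0 with h | h | h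
  · rw [Real.sign_of_neg h, abs_of_neg h]; ring
  · simp [h]
  · rw [Real.sign_of_pos h, abs_of_pos h]; ring

/-- Let `0 ≤ α < n` and `Ω` homogeneous of degree zero, bounded between `0 < c < C` on an
open subset `E` of the unit sphere.  Let `Q₁` be a cube of side `ρ`, `h ∈ ℝⁿ`,
`Q = Q₁ + ρh`, and suppose that for all `x ∈ Q`, `y ∈ Q₁` the direction `(x-y)/|x-y|`
lies in `E` and `|x-y| ≈ ρ|h|`.  Then for every locally integrable `b` with
`∫_{Q₁} b = 0` and `φ` built from `sgn(b)` on `Q₁`,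
`|∫_{Q₁} Ω(x-y)|x-y|^{α-n} b(y)φ(y) dy| ≥ c' (ρ|h|)^{α-n} ∫_{Q₁} |b|` for all `x ∈ Q`,
with `c' > 0` depending only on `c, n, α`. -/
theorem stmt_15 {n : ℕ} (hn : 0 < n) (α c C : ℝ)
    (hα0 : 0 ≤ α) (hαn : α < n) (hc : 0 < c) (hcC : c < C) :
    ∃ c' : ℝ, 0 < c' ∧
      ∀ (Ω : EuclideanSpace ℝ (Fin n) → ℝ) (E U : Set (EuclideanSpace ℝ (Fin n))),
        Measurable Ω →
        IsOpen U → E = U ∩ Metric.sphere (0 : EuclideanSpace ℝ (Fin n)) 1 →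
        (∀ t : ℝ, 0 < t → ∀ x : EuclideanSpace ℝ (Fin n), x ≠ 0 → Ω (t • x) = Ω x) →
        (∀ z ∈ E, c ≤ Ω z ∧ Ω z ≤ C) →
        ∀ (c₁ h : EuclideanSpace ℝ (Fin n)) (ρ : ℝ) (b : EuclideanSpace ℝ (Fin n) → ℝ),
          0 < ρ → 0 < ‖h‖ →
          LocallyIntegrable b volume →
          (∫ y in cubeC n c₁ ρ, b y) = 0 →
          (∀ x ∈ cubeC n (c₁ + ρ • h) ρ, ∀ y ∈ cubeC n c₁ ρ,
            x - y ≠ 0 ∧ (‖x - y‖⁻¹) • (x - y) ∈ E ∧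
            ρ * ‖h‖ / 2 ≤ ‖x - y‖ ∧ ‖x - y‖ ≤ 2 * (ρ * ‖h‖)) →
          ∀ x ∈ cubeC n (c₁ + ρ • h) ρ,
            c' * (ρ * ‖h‖) ^ (α - (n : ℝ)) * (∫ y in cubeC n c₁ ρ, |b y|) ≤
              |∫ y in cubeC n c₁ ρ, Ω (x - y) * ‖x - y‖ ^ (α - (n : ℝ)) *
                (b y * ((Real.sign (b y) -
                  (volume (cubeC n c₁ ρ)).toReal⁻¹ *
                    ∫ z in cubeC n c₁ ρ, Real.sign (b z))))| := by
  have he : α - (n : ℝ) < 0 := by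
    have : α < (n : ℝ) := hαn
    linarith
  refine ⟨c * 2 ^ (α - (n : ℝ)), by positivity, ?_⟩
  intro Ω E U hΩm hU hEU hhom hbound c₁ h ρ b hρ hh hb hb0 hgeo x hx
  set Q₁ := cubeC n c₁ ρ with hQ₁def
  have hcompact : IsCompact Q₁ := cubeC_isCompact n c₁ ρ
  have hmeas : MeasurableSet Q₁ := (cubeC_isClosed n c₁ ρ).measurableSet
  have hfin : volume Q₁ < ⊤ := hcompact.measure_lt_top
  have hbint : IntegrableOn b Q₁ := hb.integrableOn_isCompact hcompact
  set κ := (volume Q₁).toReal⁻¹ * ∫ z in Q₁, Real.sign (b z) with hκdef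
  -- |κ| ≤ 1
  have hκ1 : |κ| ≤ 1 := by
    have h1 : ‖∫ z in Q₁, Real.sign (b z)‖ ≤ 1 * (volume Q₁).toReal :=
      norm_setIntegral_le_of_norm_le_const hfin fun z _ => by
        rw [Real.norm_eq_abs]; exact abs_real_sign_le_one _
    have h2 : |κ| ≤ (volume Q₁).toReal⁻¹ * (volume Q₁).toReal := by
      rw [hκdef, abs_mul, abs_of_nonneg (inv_nonneg.mpr ENNReal.toReal_nonneg)]
      exact mul_le_mul_of_nonneg_left (by simpa using h1)
        (inv_nonneg.mpr ENNReal.toReal_nonneg)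
    refine h2.trans ?_
    rcases eq_or_ne (volume Q₁).toReal 0 with h0 | h0
    · simp [h0]
    · rw [inv_mul_cancel₀ h0]
  -- rewrite of the density factor
  have hprod : ∀ t : ℝ, t * (Real.sign t - κ) = |t| - κ * t := fun t => by
    rw [mul_sub, mul_real_sign]; ring
  have hg_nonneg : ∀ t : ℝ, 0 ≤ |t| - κ * t := fun t => by
    have : κ * t ≤ |κ * t| := le_abs_self _
    have h3 : |κ * t| ≤ |t| := by
      rw [abs_mul]
      calc |κ| * |t| ≤ 1 * |t| := mul_le_mul_of_nonneg_right hκ1 (abs_nonneg t)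
        _ = |t| := one_mul _
    linarith
  have hgint : IntegrableOn (fun y => |b y| - κ * b y) Q₁ :=
    hbint.abs.sub (hbint.const_mul κ)
  have hgval : (∫ y in Q₁, (|b y| - κ * b y)) = ∫ y in Q₁, |b y| := by
    rw [integral_sub hbint.abs (hbint.const_mul κ), integral_const_mul, hb0,
      mul_zero, sub_zero]
  -- kernel bounds
  have hρh : 0 < ρ * ‖h‖ := mul_pos hρ hh
  have hKlb : ∀ y ∈ Q₁,
      c * 2 ^ (α - (n : ℝ)) * (ρ * ‖h‖) ^ (α - (n : ℝ)) ≤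
        Ω (x - y) * ‖x - y‖ ^ (α - (n : ℝ)) := by
    intro y hy
    obtain ⟨hne, hEmem, hlow, hupp⟩ := hgeo x hx y hy
    have hnpos : 0 < ‖x - y‖ := norm_pos_iff.mpr hne
    have hΩlb : c ≤ Ω (x - y) := by
      have hu : (‖x - y‖⁻¹ • (x - y) : EuclideanSpace ℝ (Fin n)) ≠ 0 :=
        smul_ne_zero (inv_ne_zero hnpos.ne') hne
      have := hhom ‖x - y‖ hnpos (‖x - y‖⁻¹ • (x - y)) hu
      rw [smul_smul, mul_inv_cancel₀ hnpos.ne', one_smul] at this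
      rw [this]
      exact (hbound _ hEmem).1
    have hpow : (2 : ℝ) ^ (α - (n : ℝ)) * (ρ * ‖h‖) ^ (α - (n : ℝ)) ≤
        ‖x - y‖ ^ (α - (n : ℝ)) := by
      have h4 : (2 * (ρ * ‖h‖)) ^ (α - (n : ℝ)) ≤ ‖x - y‖ ^ (α - (n : ℝ)) :=
        Real.rpow_le_rpow_of_nonpos hnpos hupp he.le
      rwa [Real.mul_rpow (by norm_num) hρh.le] at h4
    calc c * 2 ^ (α - (n : ℝ)) * (ρ * ‖h‖) ^ (α - (n : ℝ))
        = c * (2 ^ (α - (n : ℝ)) * (ρ * ‖h‖) ^ (α - (n : ℝ))) := by ring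
      _ ≤ Ω (x - y) * ‖x - y‖ ^ (α - (n : ℝ)) :=
          mul_le_mul hΩlb hpow (by positivity) (hc.le.trans hΩlb)
  have hKub : ∀ y ∈ Q₁,
      Ω (x - y) * ‖x - y‖ ^ (α - (n : ℝ)) ≤ C * (ρ * ‖h‖ / 2) ^ (α - (n : ℝ)) := by
    intro y hy
    obtain ⟨hne, hEmem, hlow, hupp⟩ := hgeo x hx y hy
    have hnpos : 0 < ‖x - y‖ := norm_pos_iff.mpr hne
    have hΩub : Ω (x - y) ≤ C := by
      have hu : (‖x - y‖⁻¹ • (x - y) : EuclideanSpace ℝ (Fin n)) ≠ 0 :=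
        smul_ne_zero (inv_ne_zero hnpos.ne') hne
      have := hhom ‖x - y‖ hnpos (‖x - y‖⁻¹ • (x - y)) hu
      rw [smul_smul, mul_inv_cancel₀ hnpos.ne', one_smul] at this
      rw [this]
      exact (hbound _ hEmem).2
    have hpow : ‖x - y‖ ^ (α - (n : ℝ)) ≤ (ρ * ‖h‖ / 2) ^ (α - (n : ℝ)) :=
      Real.rpow_le_rpow_of_nonpos (by positivity) hlow he.le
    exact mul_le_mul hΩub hpow (Real.rpow_nonneg (norm_nonneg _) _)
      (le_of_lt (hc.trans hcC))
  have hK_nonneg : ∀ y ∈ Q₁, 0 ≤ Ω (x - y) * ‖x - y‖ ^ (α - (n : ℝ)) := fun y hy =>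
    le_trans (by positivity) (hKlb y hy)
  -- integrability of the full integrand
  have hFint : IntegrableOn
      (fun y => Ω (x - y) * ‖x - y‖ ^ (α - (n : ℝ)) * (|b y| - κ * b y)) Q₁ := by
    refine Integrable.mono'
      (g := fun y => C * (ρ * ‖h‖ / 2) ^ (α - (n : ℝ)) * (|b y| + |κ| * |b y|))
      ((hbint.abs.add ((hbint.abs).const_mul |κ|)).const_mul _) ?_ ?_
    · have hKm : Measurable fun y : EuclideanSpace ℝ (Fin n) =>
          Ω (x - y) * ‖x - y‖ ^ (α - (n : ℝ)) :=
        (hΩm.comp (measurable_const.sub measurable_id)).mul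
          (((measurable_const.sub measurable_id).norm).pow_const _)
      exact (hKm.aestronglyMeasurable).mul
        ((hbint.abs.sub (hbint.const_mul κ)).aestronglyMeasurable)
    · filter_upwards [ae_restrict_mem hmeas] with y hy
      rw [Real.norm_eq_abs, abs_mul,
        abs_of_nonneg (hK_nonneg y hy)]
      refine mul_le_mul (hKub y hy) ?_ (abs_nonneg _)
        (mul_nonneg (le_of_lt (hc.trans hcC)) (Real.rpow_nonneg (by positivity) _))
      calc |(|b y| - κ * b y)| ≤ |(|b y|)| + |κ * b y| := abs_sub _ _
        _ = |b y| + |κ| * |b y| := by rw [abs_abs, abs_mul]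
  -- the main comparison
  have hmono :
      (∫ y in Q₁, c * 2 ^ (α - (n : ℝ)) * (ρ * ‖h‖) ^ (α - (n : ℝ)) *
        (|b y| - κ * b y)) ≤
      ∫ y in Q₁, Ω (x - y) * ‖x - y‖ ^ (α - (n : ℝ)) * (|b y| - κ * b y) :=
    setIntegral_mono_on (hgint.const_mul _) hFint hmeas fun y hy =>
      mul_le_mul_of_nonneg_right (hKlb y hy) (hg_nonneg _)
  have hlhs :
      (∫ y in Q₁, c * 2 ^ (α - (n : ℝ)) * (ρ * ‖h‖) ^ (α - (n : ℝ)) *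
        (|b y| - κ * b y)) =
      c * 2 ^ (α - (n : ℝ)) * (ρ * ‖h‖) ^ (α - (n : ℝ)) * ∫ y in Q₁, |b y| := by
    rw [integral_const_mul, hgval]
  simp only [hprod]
  calc c * 2 ^ (α - (n : ℝ)) * (ρ * ‖h‖) ^ (α - (n : ℝ)) * ∫ y in Q₁, |b y|
      = ∫ y in Q₁, c * 2 ^ (α - (n : ℝ)) * (ρ * ‖h‖) ^ (α - (n : ℝ)) *
          (|b y| - κ * b y) := hlhs.symm
    _ ≤ ∫ y in Q₁, Ω (x - y) * ‖x - y‖ ^ (α - (n : ℝ)) * (|b y| - κ * b y) := hmono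
    _ ≤ |∫ y in Q₁, Ω (x - y) * ‖x - y‖ ^ (α - (n : ℝ)) * (|b y| - κ * b y)| :=
        le_abs_self _
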